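/- Let β > 0, a > 0, σ > 0, δ > 0, b > 0 with a + σ < b − 2δ, K > 0, h > 0 with K h² < σ^β, and λ ∈ ℂ with Im(λ²) ≤ K h². Suppose v : [0,∞) → ℂ is continuously differentiable with v and v' square-integrable on (0,∞), twice differentiable at every point of (0,a) ∪ (a,∞), satisfies −h² v''(x) + i (x−a)₊^β v(x) − λ² v(x) = 0 for all x ∈ (0,a) ∪ (a,∞), and satisfies v(0) = 0 or v'(0) = 0. Then ∫₀^b |v(x)|² dx ≤ (1 + σ^β/(σ^β − K h²)) · ∫₀^{b−2δ} |v(x)|² dx, where (x−a)₊ = max(x−a,0). -/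

import Mathlib

open MeasureTheory Set

/-- Mass comparison: under `Im(λ²) ≤ K h²` and `K h² < σ^β`, a solution of
`-h²v'' + i(x-a)₊^β v - λ²v = 0` on `(0,∞)` with `v(0) = 0` or `v'(0) = 0` satisfies
`∫₀^b |v|² ≤ (1 + σ^β/(σ^β - K h²)) ∫₀^{b-2δ} |v|²`. -/
theorem stmt_12 (β a σ δ b K h : ℝ) (hβ : 0 < β) (ha : 0 < a) (hσ : 0 < σ) (hδ : 0 < δ)
    (hb : 0 < b) (hab : a + σ < b - 2 * δ) (hK : 0 < K) (hh : 0 < h)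
    (hsmall : K * h ^ 2 < σ ^ β)
    (lam : ℂ) (him : (lam ^ 2).im ≤ K * h ^ 2)
    (v v' v'' : ℝ → ℂ)
    (hv1 : ∀ x ∈ Ici (0:ℝ), HasDerivWithinAt v (v' x) (Ici 0) x)
    (hv1c : ContinuousOn v' (Ici 0))
    (hvL2 : IntegrableOn (fun x => ‖v x‖ ^ 2) (Ioi 0))
    (hv'L2 : IntegrableOn (fun x => ‖v' x‖ ^ 2) (Ioi 0))
    (hv2 : ∀ x ∈ Ioo (0:ℝ) a ∪ Ioi a, HasDerivAt v' (v'' x) x)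
    (hbc : v 0 = 0 ∨ v' 0 = 0)
    (hode : ∀ x ∈ Ioo (0:ℝ) a ∪ Ioi a,
      -(h:ℂ) ^ 2 * v'' x + Complex.I * (((max (x - a) 0) ^ β : ℝ) : ℂ) * v x
        - lam ^ 2 * v x = 0) :
    ∫ x in Ioo (0:ℝ) b, ‖v x‖ ^ 2
      ≤ (1 + σ ^ β / (σ ^ β - K * h ^ 2)) * ∫ x in Ioo (0:ℝ) (b - 2 * δ), ‖v x‖ ^ 2 := by
  have hD : 0 < σ ^ β - K * h ^ 2 := by linarith
  have hKh : 0 < K * h ^ 2 := by positivity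
  have hσβ : 0 < σ ^ β := by positivity
  have hba : a < b := by nlinarith
  have hb2δ : 0 < b - 2 * δ := by nlinarith
  -- continuity facts
  have hvc : ContinuousOn v (Ici 0) := fun x hx => (hv1 x hx).continuousWithinAt
  have hqc : Continuous (fun x : ℝ => (max (x - a) 0) ^ β) := by
    rw [continuous_iff_continuousAt]; intro x
    exact (Real.continuousAt_rpow_const _ _ (Or.inr hβ.le)).comp (by fun_prop)
  have hnvc : ContinuousOn (fun x : ℝ => ‖v x‖ ^ 2) (Ici 0) := (hvc.norm.pow 2)
  have hInt : ∀ c d : ℝ, 0 ≤ c → c ≤ d →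
      IntervalIntegrable (fun x : ℝ => ‖v x‖ ^ 2) volume c d := by
    intro c d hc hcd
    refine (hnvc.mono ?_).intervalIntegrable
    rw [uIcc_of_le hcd]; exact fun x hx => hc.trans hx.1
  have hIntq : ∀ c d : ℝ, 0 ≤ c → c ≤ d →
      IntervalIntegrable (fun x : ℝ => (max (x - a) 0) ^ β * ‖v x‖ ^ 2) volume c d := by
    intro c d hc hcd
    refine ((hqc.continuousOn.mul hnvc).mono ?_).intervalIntegrable
    rw [uIcc_of_le hcd]; exact fun x hx => hc.trans hx.1
  have hIntf : ∀ c d : ℝ, 0 ≤ c → c ≤ d →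
      IntervalIntegrable
        (fun x : ℝ => (max (x - a) 0) ^ β * ‖v x‖ ^ 2 - (lam ^ 2).im * ‖v x‖ ^ 2)
        volume c d := fun c d hc hcd =>
    (hIntq c d hc hcd).sub ((hInt c d hc hcd).const_mul _)
  -- derivative of G
  set G : ℝ → ℝ := fun y => h ^ 2 * (v' y * (starRingEnd ℂ) (v y)).im with hGdef
  have hG : ∀ x ∈ Ioo (0:ℝ) a ∪ Ioi a,
      HasDerivAt G ((max (x - a) 0) ^ β * ‖v x‖ ^ 2 - (lam ^ 2).im * ‖v x‖ ^ 2) x := by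
    intro x hx
    have hx0 : 0 < x := by rcases hx with h1 | h1; exacts [h1.1, ha.trans h1]
    have hvx : HasDerivAt v (v' x) x := (hv1 x hx0.le).hasDerivAt (Ici_mem_nhds hx0)
    have h1 : HasDerivAt (fun y => v' y * (starRingEnd ℂ) (v y))
        (v'' x * (starRingEnd ℂ) (v x) + v' x * (starRingEnd ℂ) (v' x)) x :=
      (hv2 x hx).mul hvx.star
    have h2 : HasDerivAt (fun y => (v' y * (starRingEnd ℂ) (v y)).im)
        ((v'' x * (starRingEnd ℂ) (v x) + v' x * (starRingEnd ℂ) (v' x)).im) x :=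
      Complex.imCLM.hasFDerivAt.comp_hasDerivAt x h1
    have h3 := h2.const_mul (h ^ 2)
    refine h3.congr_deriv ?_
    have key : (h:ℂ) ^ 2 * v'' x
        = Complex.I * (((max (x - a) 0) ^ β : ℝ) : ℂ) * v x - lam ^ 2 * v x := by
      have := hode x hx; linear_combination -this
    have e1 : h ^ 2 * (v'' x * (starRingEnd ℂ) (v x)).im
        = (((h:ℂ) ^ 2 * v'' x) * (starRingEnd ℂ) (v x)).im := by
      rw [mul_assoc, Complex.mul_im]
      simp [← Complex.ofReal_pow]
    rw [Complex.add_im, mul_add, e1, key, sub_mul, mul_assoc, mul_assoc,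
      Complex.mul_conj, Complex.mul_conj]
    simp only [Complex.sub_im, Complex.mul_im, Complex.mul_re, Complex.I_re,
      Complex.I_im, Complex.ofReal_re, Complex.ofReal_im,
      Complex.sq_norm, Complex.normSq_apply, Complex.conj_re, Complex.conj_im]
    ring
  -- G is continuous on [0, ∞), and G 0 = 0
  have hGc : ContinuousOn G (Ici 0) :=
    continuousOn_const.mul (Complex.continuous_im.comp_continuousOn
      (hv1c.mul (Complex.continuous_conj.comp_continuousOn hvc)))
  have hG0 : G 0 = 0 := by rcases hbc with h1 | h1 <;> simp [hGdef, h1]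
  -- FTC on [0, R]
  have hFTC : ∀ R : ℝ, b ≤ R →
      (∫ x in (0:ℝ)..R, ((max (x - a) 0) ^ β * ‖v x‖ ^ 2 - (lam ^ 2).im * ‖v x‖ ^ 2)) = G R := by
    intro R hR
    have haR : a ≤ R := le_trans hba.le hR
    have e1 : (∫ x in (0:ℝ)..a, ((max (x - a) 0) ^ β * ‖v x‖ ^ 2 - (lam ^ 2).im * ‖v x‖ ^ 2))
        = G a - G 0 := by
      refine intervalIntegral.integral_eq_sub_of_hasDerivAt_of_le ha.le
        (hGc.mono (fun x hx => hx.1)) (fun x hx => hG x (Or.inl hx)) (hIntf 0 a le_rfl ha.le)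
    have e2 : (∫ x in a..R, ((max (x - a) 0) ^ β * ‖v x‖ ^ 2 - (lam ^ 2).im * ‖v x‖ ^ 2))
        = G R - G a := by
      refine intervalIntegral.integral_eq_sub_of_hasDerivAt_of_le haR
        (hGc.mono (fun x hx => ha.le.trans hx.1)) (fun x hx => hG x (Or.inr hx.1))
        (hIntf a R ha.le haR)
    have e3 := intervalIntegral.integral_add_adjacent_intervals
      (hIntf 0 a le_rfl ha.le) (hIntf a R ha.le haR)
    rw [← e3, e1, e2, hG0]; ring
  -- escape to small G at infinity
  have hgint : IntegrableOn (fun x : ℝ => h ^ 2 * (‖v x‖ ^ 2 + ‖v' x‖ ^ 2)) (Ioi 0) :=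
    (hvL2.add hv'L2).const_mul _
  have hesc : ∀ ε > (0:ℝ), ∃ R, b ≤ R ∧ h ^ 2 * (‖v R‖ ^ 2 + ‖v' R‖ ^ 2) < ε := by
    intro ε hε
    by_contra hcon
    push_neg at hcon
    have h1 : IntegrableOn (fun x : ℝ => h ^ 2 * (‖v x‖ ^ 2 + ‖v' x‖ ^ 2)) (Ioi b) :=
      hgint.mono_set (Ioi_subset_Ioi hb.le)
    have h2 : Integrable (fun _ : ℝ => ε) (volume.restrict (Ioi b)) := by
      refine h1.mono' aestronglyMeasurable_const ?_
      filter_upwards [ae_restrict_mem measurableSet_Ioi] with x hx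
      rw [Real.norm_eq_abs, abs_of_pos hε]
      exact hcon x (le_of_lt hx)
    rw [integrable_const_iff] at h2
    rcases h2 with h2 | h2
    · exact hε.ne' h2
    · have h3 := h2.measure_univ_lt_top
      rw [Measure.restrict_apply_univ, Real.volume_Ioi] at h3
      exact (lt_irrefl _ h3).elim
  have hGle : ∀ x : ℝ, G x ≤ h ^ 2 * (‖v x‖ ^ 2 + ‖v' x‖ ^ 2) := by
    intro x
    have h1 : (v' x * (starRingEnd ℂ) (v x)).im ≤ ‖v x‖ ^ 2 + ‖v' x‖ ^ 2 := by
      have h2 : (v' x * (starRingEnd ℂ) (v x)).im ≤ ‖v' x * (starRingEnd ℂ) (v x)‖ := by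
        exact Complex.im_le_norm _
      have h3 : ‖v' x * (starRingEnd ℂ) (v x)‖ = ‖v' x‖ * ‖v x‖ := by
        rw [norm_mul, RCLike.norm_conj]
      nlinarith [sq_nonneg (‖v x‖ - ‖v' x‖)]
    have h4 : (0:ℝ) ≤ h ^ 2 := sq_nonneg h
    calc G x = h ^ 2 * (v' x * (starRingEnd ℂ) (v x)).im := rfl
      _ ≤ h ^ 2 * (‖v x‖ ^ 2 + ‖v' x‖ ^ 2) := by
          exact mul_le_mul_of_nonneg_left h1 h4
  -- key spectral inequality
  have haσ : 0 < a + σ := by positivity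
  have haσb : a + σ ≤ b - 2 * δ := hab.le
  have hkey : (σ ^ β - K * h ^ 2) * (∫ x in (b - 2*δ)..b, ‖v x‖ ^ 2)
      ≤ K * h ^ 2 * ∫ x in (0:ℝ)..(b - 2*δ), ‖v x‖ ^ 2 := by
    refine le_of_forall_pos_le_add (fun ε hε => ?_)
    obtain ⟨R, hRb, hgR⟩ := hesc ε hε
    have hGR : G R ≤ ε := le_of_lt (lt_of_le_of_lt (hGle R) hgR)
    have haσR : a + σ ≤ R := le_trans (by linarith) hRb
    set I1 := ∫ x in (0:ℝ)..(a+σ), ‖v x‖ ^ 2 with hI1def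
    set I2 := ∫ x in (a+σ)..R, ‖v x‖ ^ 2 with hI2def
    set T := ∫ x in (b - 2*δ)..b, ‖v x‖ ^ 2 with hTdef
    set B := ∫ x in (0:ℝ)..(b - 2*δ), ‖v x‖ ^ 2 with hBdef
    set X := ∫ x in (0:ℝ)..R, ‖v x‖ ^ 2 with hXdef
    set Q0 := ∫ x in (0:ℝ)..R, (max (x - a) 0) ^ β * ‖v x‖ ^ 2 with hQ0def
    set Qr := ∫ x in (a+σ)..R, (max (x - a) 0) ^ β * ‖v x‖ ^ 2 with hQrdef
    have hI2nn : (0:ℝ) ≤ ∫ x in (a+σ)..R, ‖v x‖ ^ 2 :=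
      intervalIntegral.integral_nonneg haσR (fun u _ => by positivity)
    -- s1 : σ^β * I2 ≤ ∫ q·nv over (a+σ)..R
    have s1 : σ ^ β * (∫ x in (a+σ)..R, ‖v x‖ ^ 2)
        ≤ ∫ x in (a+σ)..R, (max (x - a) 0) ^ β * ‖v x‖ ^ 2 := by
      rw [← intervalIntegral.integral_const_mul]
      refine intervalIntegral.integral_mono_on haσR
        ((hInt (a+σ) R haσ.le haσR).const_mul _) (hIntq (a+σ) R haσ.le haσR) ?_
      intro x hx
      have hσx : σ ≤ max (x - a) 0 := le_max_of_le_left (by linarith [hx.1])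
      have : σ ^ β ≤ (max (x - a) 0) ^ β := Real.rpow_le_rpow hσ.le hσx hβ.le
      have hnn : (0:ℝ) ≤ ‖v x‖ ^ 2 := by positivity
      exact mul_le_mul_of_nonneg_right this hnn
    -- s2 : extend to 0..R
    have s2 : (∫ x in (a+σ)..R, (max (x - a) 0) ^ β * ‖v x‖ ^ 2)
        ≤ ∫ x in (0:ℝ)..R, (max (x - a) 0) ^ β * ‖v x‖ ^ 2 := by
      have e := intervalIntegral.integral_add_adjacent_intervals
        (hIntq 0 (a+σ) le_rfl haσ.le) (hIntq (a+σ) R haσ.le haσR)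
      have hnn : (0:ℝ) ≤ ∫ x in (0:ℝ)..(a+σ), (max (x - a) 0) ^ β * ‖v x‖ ^ 2 :=
        intervalIntegral.integral_nonneg haσ.le (fun u _ => by positivity)
      linarith [e]
    -- s3 : FTC rearranged
    have hbR0 : (0:ℝ) ≤ R := le_trans hb.le hRb
    have s3 : (∫ x in (0:ℝ)..R, (max (x - a) 0) ^ β * ‖v x‖ ^ 2)
        = G R + (lam ^ 2).im * ∫ x in (0:ℝ)..R, ‖v x‖ ^ 2 := by
      have e := hFTC R hRb
      rw [intervalIntegral.integral_sub (hIntq 0 R le_rfl hbR0)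
        ((hInt 0 R le_rfl hbR0).const_mul _), intervalIntegral.integral_const_mul] at e
      linarith [e]
    have hRnn : (0:ℝ) ≤ ∫ x in (0:ℝ)..R, ‖v x‖ ^ 2 :=
      intervalIntegral.integral_nonneg hbR0 (fun u _ => by positivity)
    have s4 : (lam ^ 2).im * (∫ x in (0:ℝ)..R, ‖v x‖ ^ 2)
        ≤ K * h ^ 2 * ∫ x in (0:ℝ)..R, ‖v x‖ ^ 2 :=
      mul_le_mul_of_nonneg_right him hRnn
    have s5 : (∫ x in (0:ℝ)..R, ‖v x‖ ^ 2)
        = (∫ x in (0:ℝ)..(a+σ), ‖v x‖ ^ 2) + ∫ x in (a+σ)..R, ‖v x‖ ^ 2 :=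
      (intervalIntegral.integral_add_adjacent_intervals
        (hInt 0 (a+σ) le_rfl haσ.le) (hInt (a+σ) R haσ.le haσR)).symm
    have s6 : (∫ x in (b - 2*δ)..b, ‖v x‖ ^ 2) ≤ ∫ x in (a+σ)..R, ‖v x‖ ^ 2 := by
      refine intervalIntegral.integral_mono_interval haσb (by linarith) hRb ?_
        (hInt (a+σ) R haσ.le haσR)
      filter_upwards with x using by positivity
    have s7 : (∫ x in (0:ℝ)..(a+σ), ‖v x‖ ^ 2) ≤ ∫ x in (0:ℝ)..(b - 2*δ), ‖v x‖ ^ 2 := by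
      refine intervalIntegral.integral_mono_interval le_rfl haσ.le haσb ?_
        (hInt 0 (b - 2*δ) le_rfl hb2δ.le)
      filter_upwards with x using by positivity
    have s8 : (σ ^ β - K * h ^ 2) * (∫ x in (b - 2*δ)..b, ‖v x‖ ^ 2)
        ≤ (σ ^ β - K * h ^ 2) * ∫ x in (a+σ)..R, ‖v x‖ ^ 2 :=
      mul_le_mul_of_nonneg_left s6 hD.le
    have p2 : K * h ^ 2 * (∫ x in (0:ℝ)..R, ‖v x‖ ^ 2)
        = K * h ^ 2 * (∫ x in (0:ℝ)..(a+σ), ‖v x‖ ^ 2)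
          + K * h ^ 2 * ∫ x in (a+σ)..R, ‖v x‖ ^ 2 := by
      rw [s5]; ring
    have p3 : K * h ^ 2 * (∫ x in (0:ℝ)..(a+σ), ‖v x‖ ^ 2)
        ≤ K * h ^ 2 * ∫ x in (0:ℝ)..(b - 2*δ), ‖v x‖ ^ 2 :=
      mul_le_mul_of_nonneg_left s7 hKh.le
    linarith [s1, s2, s3, s4, s8, hGR, p2, p3]
  -- conclude
  have econv : ∀ c : ℝ, 0 ≤ c →
      (∫ x in Ioo (0:ℝ) c, ‖v x‖ ^ 2) = ∫ x in (0:ℝ)..c, ‖v x‖ ^ 2 := by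
    intro c hc
    rw [intervalIntegral.integral_of_le hc, integral_Ioc_eq_integral_Ioo]
  rw [econv b hb.le, econv (b - 2*δ) hb2δ.le]
  have esplit : (∫ x in (0:ℝ)..b, ‖v x‖ ^ 2)
      = (∫ x in (0:ℝ)..(b - 2*δ), ‖v x‖ ^ 2) + ∫ x in (b - 2*δ)..b, ‖v x‖ ^ 2 :=
    (intervalIntegral.integral_add_adjacent_intervals
      (hInt 0 (b - 2*δ) le_rfl hb2δ.le) (hInt (b - 2*δ) b hb2δ.le (by linarith))).symm
  set B := ∫ x in (0:ℝ)..(b - 2*δ), ‖v x‖ ^ 2 with hB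
  set T := ∫ x in (b - 2*δ)..b, ‖v x‖ ^ 2 with hT
  have hBnn : 0 ≤ B :=
    intervalIntegral.integral_nonneg hb2δ.le (fun u _ => by positivity)
  have hTle : T ≤ σ ^ β * B / (σ ^ β - K * h ^ 2) := by
    rw [le_div_iff₀ hD]
    nlinarith [hkey, mul_le_mul_of_nonneg_right hsmall.le hBnn]
  rw [esplit]
  have : (1 + σ ^ β / (σ ^ β - K * h ^ 2)) * B = B + σ ^ β * B / (σ ^ β - K * h ^ 2) := by
    ring
  rw [this]
  linarith
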